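/- Let Δ₁ = conv{(0,0),(1,0),(0,1)} and Δ₂ = conv{(1,0),(0,1),(1,1)} in ℝ², let T ⊂ ℤ² be a finite nonempty set, and let Δ = conv(T). Assume that the area of Δ₁ + Δ and the area of Δ₂ + Δ are both at least 2. Then the three-dimensional Lebesgue measure of the convex hull in ℝ³ of {(x, y, 0) : (x, y) ∈ Δ₁ + Δ} ∪ {(x, y, 1) : (x, y) ∈ Δ₂ + Δ} is at least 11/6. -/

import Mathlib

open scoped Pointwise
open MeasureTheory

/-- The triangle `conv{(0,0), (1,0), (0,1)} ⊂ ℝ²`. -/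
noncomputable def Δ₁ : Set (ℝ × ℝ) :=
  convexHull ℝ {((0 : ℝ), (0 : ℝ)), ((1 : ℝ), (0 : ℝ)), ((0 : ℝ), (1 : ℝ))}

/-- The triangle `conv{(1,0), (0,1), (1,1)} ⊂ ℝ²`. -/
noncomputable def Δ₂ : Set (ℝ × ℝ) :=
  convexHull ℝ {((1 : ℝ), (0 : ℝ)), ((0 : ℝ), (1 : ℝ)), ((1 : ℝ), (1 : ℝ))}

open scoped ENNReal
open Set

namespace ElevenSixth

/-- A convex compact nonempty subset of `ℝ` is a closed interval. -/
lemma eq_Icc {P : Set ℝ} (hc : Convex ℝ P) (hk : IsCompact P) (hn : P.Nonempty) :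
    P = Icc (sInf P) (sSup P) := by
  apply Subset.antisymm
  · exact fun x hx => ⟨csInf_le hk.bddBelow hx, le_csSup hk.bddAbove hx⟩
  · exact hc.ordConnected.out (hk.isClosed.csInf_mem hn hk.bddBelow)
      (hk.isClosed.csSup_mem hn hk.bddAbove)

lemma vol_eq {P : Set ℝ} (hc : Convex ℝ P) (hk : IsCompact P) (hn : P.Nonempty) :
    volume P = ENNReal.ofReal (sSup P - sInf P) := by
  conv_lhs => rw [eq_Icc hc hk hn]
  exact Real.volume_Icc

/-- 1D Brunn-Minkowski for convex compact sets. -/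
lemma oneD {P Q : Set ℝ} (hPc : Convex ℝ P) (hQc : Convex ℝ Q) (hPk : IsCompact P)
    (hQk : IsCompact Q) (hPn : P.Nonempty) (hQn : Q.Nonempty) :
    volume P + volume Q ≤ volume (P + Q) := by
  obtain ⟨x, hx⟩ := hPn
  obtain ⟨y, hy⟩ := hQn
  have hP1 : sInf P ≤ sSup P := le_trans (csInf_le hPk.bddBelow hx) (le_csSup hPk.bddAbove hx)
  have hQ1 : sInf Q ≤ sSup Q := le_trans (csInf_le hQk.bddBelow hy) (le_csSup hQk.bddAbove hy)
  have hsub : Icc (sInf P + sInf Q) (sSup P + sSup Q) ⊆ P + Q := by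
    apply (hPc.add hQc).ordConnected.out
    · exact add_mem_add (hPk.isClosed.csInf_mem ⟨x, hx⟩ hPk.bddBelow)
        (hQk.isClosed.csInf_mem ⟨y, hy⟩ hQk.bddBelow)
    · exact add_mem_add (hPk.isClosed.csSup_mem ⟨x, hx⟩ hPk.bddAbove)
        (hQk.isClosed.csSup_mem ⟨y, hy⟩ hQk.bddAbove)
  calc volume P + volume Q
      = ENNReal.ofReal (sSup P - sInf P) + ENNReal.ofReal (sSup Q - sInf Q) := by
        rw [vol_eq hPc hPk ⟨x, hx⟩, vol_eq hQc hQk ⟨y, hy⟩]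
    _ = ENNReal.ofReal ((sSup P + sSup Q) - (sInf P + sInf Q)) := by
        rw [← ENNReal.ofReal_add (by linarith) (by linarith)]
        ring_nf
    _ = volume (Icc (sInf P + sInf Q) (sSup P + sSup Q)) := Real.volume_Icc.symm
    _ ≤ volume (P + Q) := measure_mono hsub

lemma slc_convex {X : Set (ℝ × ℝ)} (hc : Convex ℝ X) (x : ℝ) :
    Convex ℝ (Prod.mk x ⁻¹' X) := by
  intro y1 h1 y2 h2 a b ha hb hab
  simp only [mem_preimage] at *
  have h3 : (Prod.mk x (a • y1 + b • y2) : ℝ × ℝ) = a • (x, y1) + b • (x, y2) := by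
    simp only [Prod.smul_mk, Prod.mk_add_mk, smul_eq_mul, Prod.mk.injEq]
    constructor
    · rw [← add_mul, hab, one_mul]
    · trivial
  rw [h3]
  exact hc h1 h2 ha hb hab

lemma slc_compact {X : Set (ℝ × ℝ)} (hk : IsCompact X) (x : ℝ) :
    IsCompact (Prod.mk x ⁻¹' X) := by
  have hcl : IsClosed (Prod.mk x ⁻¹' X) := hk.isClosed.preimage (Continuous.prodMk_right x)
  have hbd : Bornology.IsBounded (Prod.mk x ⁻¹' X) := by
    apply Bornology.IsBounded.subset (hk.image continuous_snd).isBounded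
    intro y hy
    exact ⟨(x, y), hy, rfl⟩
  exact Metric.isCompact_of_isClosed_isBounded hcl hbd

lemma slc_nonempty {X : Set (ℝ × ℝ)} {x : ℝ} (h : x ∈ Prod.fst '' X) :
    (Prod.mk x ⁻¹' X).Nonempty := by
  obtain ⟨p, hp, rfl⟩ := h
  exact ⟨p.2, by simpa [mem_preimage] using hp⟩

lemma slc_empty {X : Set (ℝ × ℝ)} {x : ℝ} (h : x ∉ Prod.fst '' X) :
    Prod.mk x ⁻¹' X = ∅ := by
  ext y
  simp only [mem_preimage, mem_empty_iff_false, iff_false]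
  exact fun hmem => h ⟨(x, y), hmem, rfl⟩

lemma prj_eq {X : Set (ℝ × ℝ)} (hc : Convex ℝ X) (hk : IsCompact X) (hn : X.Nonempty) :
    Prod.fst '' X = Icc (sInf (Prod.fst '' X)) (sSup (Prod.fst '' X)) := by
  have hcI : Convex ℝ (Prod.fst '' X) := hc.linear_image (LinearMap.fst ℝ ℝ ℝ)
  exact eq_Icc hcI (hk.image continuous_fst) (hn.image _)

lemma lintegral_comp_affine {f : ℝ → ℝ≥0∞} (hf : Measurable f) {θ c : ℝ} (hθ : 0 < θ) :
    ∫⁻ s, f (θ * s + c) = ENNReal.ofReal θ⁻¹ * ∫⁻ x, f x := by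
  have hθ' : θ ≠ 0 := ne_of_gt hθ
  have hmap : Measure.map (fun s : ℝ => θ * s + c) volume
      = ENNReal.ofReal θ⁻¹ • (volume : Measure ℝ) := by
    have h1 : (fun s : ℝ => θ * s + c) = (fun x : ℝ => x + c) ∘ (fun s : ℝ => θ * s) := rfl
    rw [h1, ← Measure.map_map (measurable_add_const c) (measurable_const_mul θ),
      show (fun s : ℝ => θ * s) = (θ * ·) from rfl, Real.map_volume_mul_left hθ',
      Measure.map_smul, show (fun x : ℝ => x + c) = (· + c) from rfl,
      map_add_right_eq_self _ c, abs_of_pos (inv_pos.mpr hθ)]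
  calc ∫⁻ s, f (θ * s + c)
      = ∫⁻ x, f x ∂(Measure.map (fun s : ℝ => θ * s + c) volume) :=
        (lintegral_map hf ((measurable_const_mul θ).add_const c)).symm
    _ = ENNReal.ofReal θ⁻¹ * ∫⁻ x, f x := by rw [hmap, lintegral_smul_measure, smul_eq_mul]

/-- Key planar inequality: `vol(X+Y) ≥ ((u+v)/u) vol X + ((u+v)/v) vol Y` where `u, v` are the
horizontal widths of `X` and `Y`. -/
lemma key {X Y : Set (ℝ × ℝ)} {a b u v : ℝ}
    (hXc : Convex ℝ X) (hYc : Convex ℝ Y) (hXk : IsCompact X) (hYk : IsCompact Y)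
    (hXp : Prod.fst '' X = Icc a (a + u)) (hYp : Prod.fst '' Y = Icc b (b + v))
    (hu : 0 < u) (hv : 0 < v) :
    ENNReal.ofReal ((u + v) / u) * volume X + ENNReal.ofReal ((u + v) / v) * volume Y
      ≤ volume (X + Y) := by
  have huv : 0 < u + v := by linarith
  set θ : ℝ := u / (u + v) with hθdef
  have hθ0 : 0 < θ := div_pos hu huv
  have hθ1 : θ < 1 := by
    rw [hθdef, div_lt_one huv]; linarith
  have hθuv : θ * (u + v) = u := by
    rw [hθdef]; field_simp
  have h1θuv : (1 - θ) * (u + v) = v := by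
    rw [hθdef]; field_simp; ring
  set c1 : ℝ := a - θ * (a + b) with hc1
  set c2 : ℝ := b - (1 - θ) * (a + b) with hc2
  have hXm : MeasurableSet X := hXk.isClosed.measurableSet
  have hYm : MeasurableSet Y := hYk.isClosed.measurableSet
  have hXYm : MeasurableSet (X + Y) := (hXk.add hYk).isClosed.measurableSet
  set f : ℝ → ℝ≥0∞ := fun x => volume (Prod.mk x ⁻¹' X) with hf
  set g : ℝ → ℝ≥0∞ := fun x => volume (Prod.mk x ⁻¹' Y) with hg
  have hfm : Measurable f := measurable_measure_prodMk_left hXm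
  have hgm : Measurable g := measurable_measure_prodMk_left hYm
  have hpt : ∀ s : ℝ, f (θ * s + c1) + g ((1 - θ) * s + c2)
      ≤ volume (Prod.mk s ⁻¹' (X + Y)) := by
    intro s
    by_cases hs : a + b ≤ s ∧ s ≤ a + b + (u + v)
    · obtain ⟨hs1, hs2⟩ := hs
      have hx1 : θ * s + c1 ∈ Icc a (a + u) := by
        constructor
        · rw [hc1]; nlinarith [mul_nonneg hθ0.le (sub_nonneg.2 hs1)]
        · rw [hc1]
          nlinarith [mul_le_mul_of_nonneg_left (show s - (a + b) ≤ u + v by linarith) hθ0.le]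
      have hx2 : (1 - θ) * s + c2 ∈ Icc b (b + v) := by
        have h1θ0 : (0:ℝ) < 1 - θ := by linarith
        constructor
        · rw [hc2]; nlinarith [mul_nonneg h1θ0.le (sub_nonneg.2 hs1)]
        · rw [hc2]
          nlinarith [mul_le_mul_of_nonneg_left (show s - (a + b) ≤ u + v by linarith) h1θ0.le]
      have hXs : (Prod.mk (θ * s + c1) ⁻¹' X).Nonempty := by
        apply slc_nonempty; rw [hXp]; exact hx1
      have hYs : (Prod.mk ((1 - θ) * s + c2) ⁻¹' Y).Nonempty := by
        apply slc_nonempty; rw [hYp]; exact hx2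
      have hsub : Prod.mk (θ * s + c1) ⁻¹' X + Prod.mk ((1 - θ) * s + c2) ⁻¹' Y
          ⊆ Prod.mk s ⁻¹' (X + Y) := by
        rintro y ⟨y1, h1, y2, h2, rfl⟩
        rw [mem_preimage]
        have he : (Prod.mk s (y1 + y2) : ℝ × ℝ)
            = (θ * s + c1, y1) + ((1 - θ) * s + c2, y2) := by
          simp only [Prod.mk_add_mk, Prod.mk.injEq]
          constructor
          · rw [hc1, hc2]; ring
          · trivial
        rw [he]
        exact add_mem_add h1 h2
      calc f (θ * s + c1) + g ((1 - θ) * s + c2)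
          ≤ volume (Prod.mk (θ * s + c1) ⁻¹' X + Prod.mk ((1 - θ) * s + c2) ⁻¹' Y) :=
            oneD (slc_convex hXc _) (slc_convex hYc _) (slc_compact hXk _) (slc_compact hYk _)
              hXs hYs
        _ ≤ volume (Prod.mk s ⁻¹' (X + Y)) := measure_mono hsub
    · rw [not_and_or] at hs
      have hzero : f (θ * s + c1) = 0 ∧ g ((1 - θ) * s + c2) = 0 := by
        rcases hs with h | h
        · push_neg at h
          constructor
          · have : θ * s + c1 ∉ Prod.fst '' X := by
              rw [hXp, mem_Icc, not_and_or]
              left; push_neg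
              rw [hc1]; nlinarith [mul_pos hθ0 (show (0:ℝ) < a + b - s by linarith)]
            show volume (Prod.mk (θ * s + c1) ⁻¹' X) = 0
            rw [slc_empty this]; exact measure_empty
          · have h1θ0 : (0:ℝ) < 1 - θ := by linarith
            have : (1 - θ) * s + c2 ∉ Prod.fst '' Y := by
              rw [hYp, mem_Icc, not_and_or]
              left; push_neg
              rw [hc2]; nlinarith [mul_pos h1θ0 (show (0:ℝ) < a + b - s by linarith)]
            show volume (Prod.mk ((1 - θ) * s + c2) ⁻¹' Y) = 0
            rw [slc_empty this]; exact measure_empty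
        · push_neg at h
          constructor
          · have : θ * s + c1 ∉ Prod.fst '' X := by
              rw [hXp, mem_Icc, not_and_or]
              right; push_neg
              rw [hc1]
              nlinarith [mul_lt_mul_of_pos_left (show u + v < s - (a + b) by linarith) hθ0]
            show volume (Prod.mk (θ * s + c1) ⁻¹' X) = 0
            rw [slc_empty this]; exact measure_empty
          · have h1θ0 : (0:ℝ) < 1 - θ := by linarith
            have : (1 - θ) * s + c2 ∉ Prod.fst '' Y := by
              rw [hYp, mem_Icc, not_and_or]
              right; push_neg
              rw [hc2]
              nlinarith [mul_lt_mul_of_pos_left (show u + v < s - (a + b) by linarith) h1θ0]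
            show volume (Prod.mk ((1 - θ) * s + c2) ⁻¹' Y) = 0
            rw [slc_empty this]; exact measure_empty
      rw [hzero.1, hzero.2, add_zero]
      exact zero_le
  have hvolXY : volume (X + Y) = ∫⁻ s, volume (Prod.mk s ⁻¹' (X + Y)) := by
    rw [Measure.volume_eq_prod]; exact Measure.prod_apply hXYm
  have hvolX : volume X = ∫⁻ x, f x := by
    rw [Measure.volume_eq_prod]; exact Measure.prod_apply hXm
  have hvolY : volume Y = ∫⁻ x, g x := by
    rw [Measure.volume_eq_prod]; exact Measure.prod_apply hYm
  have hlhs : ∫⁻ s, (f (θ * s + c1) + g ((1 - θ) * s + c2))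
      = ENNReal.ofReal θ⁻¹ * (∫⁻ x, f x) + ENNReal.ofReal ((1 - θ)⁻¹) * ∫⁻ x, g x := by
    rw [lintegral_add_left
        (show Measurable fun s : ℝ => f (θ * s + c1) from
          hfm.comp ((measurable_const_mul θ).add_const c1)),
      lintegral_comp_affine hfm hθ0, lintegral_comp_affine hgm (by linarith)]
  have e1 : θ⁻¹ = (u + v) / u := by rw [hθdef, inv_div]
  have e2 : (1 - θ)⁻¹ = (u + v) / v := by
    have : 1 - θ = v / (u + v) := by rw [hθdef]; field_simp; ring
    rw [this, inv_div]
  calc ENNReal.ofReal ((u + v) / u) * volume X + ENNReal.ofReal ((u + v) / v) * volume Y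
      = ∫⁻ s, (f (θ * s + c1) + g ((1 - θ) * s + c2)) := by
        rw [hlhs, e1, e2, hvolX, hvolY]
    _ ≤ ∫⁻ s, volume (Prod.mk s ⁻¹' (X + Y)) := lintegral_mono hpt
    _ = volume (X + Y) := hvolXY.symm

lemma real_ineq {u v z a b : ℝ} (hu : 0 < u) (hv : 0 < v) (hz0 : 0 ≤ z) (hz1 : z ≤ 1)
    (ha : 2 ≤ a) (hb : 2 ≤ b) :
    2 ≤ (u + v) / u * ((1 - z) ^ 2 * a) + (u + v) / v * (z ^ 2 * b) := by
  rw [div_mul_eq_mul_div, div_mul_eq_mul_div, div_add_div _ _ (ne_of_gt hu) (ne_of_gt hv),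
    le_div_iff₀ (mul_pos hu hv)]
  nlinarith [sq_nonneg (v * (1 - z) - u * z),
    mul_nonneg (mul_nonneg (mul_nonneg (by linarith : (0:ℝ) ≤ u + v) hv.le) (sq_nonneg (1 - z)))
      (by linarith : (0:ℝ) ≤ a - 2),
    mul_nonneg (mul_nonneg (mul_nonneg (by linarith : (0:ℝ) ≤ u + v) hu.le) (sq_nonneg z))
      (by linarith : (0:ℝ) ≤ b - 2)]

/-- The coordinate permutation `(z,(x,y)) ↦ (x,(y,z))` preserves volume. -/
lemma mp : MeasurePreserving (fun q : ℝ × ℝ × ℝ => (q.2.1, q.2.2, q.1))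
    (volume : Measure (ℝ × ℝ × ℝ)) volume := by
  have h1 : MeasurePreserving (Prod.swap : ℝ × (ℝ × ℝ) → (ℝ × ℝ) × ℝ)
      (volume : Measure (ℝ × (ℝ × ℝ))) (volume : Measure ((ℝ × ℝ) × ℝ)) := by
    rw [Measure.volume_eq_prod, Measure.volume_eq_prod]
    exact Measure.measurePreserving_swap
  have h2 : MeasurePreserving
      (MeasurableEquiv.prodAssoc : (ℝ × ℝ) × ℝ ≃ᵐ ℝ × ℝ × ℝ)
      (volume : Measure ((ℝ × ℝ) × ℝ)) (volume : Measure (ℝ × ℝ × ℝ)) := by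
    have h := measurePreserving_prodAssoc (volume : Measure ℝ) (volume : Measure ℝ)
      (volume : Measure ℝ)
    have e1 : (volume : Measure ((ℝ × ℝ) × ℝ))
        = ((volume : Measure ℝ).prod (volume : Measure ℝ)).prod (volume : Measure ℝ) := by
      rw [Measure.volume_eq_prod, Measure.volume_eq_prod]
    have e2 : (volume : Measure (ℝ × ℝ × ℝ))
        = (volume : Measure ℝ).prod ((volume : Measure ℝ).prod (volume : Measure ℝ)) := by
      rw [Measure.volume_eq_prod, Measure.volume_eq_prod]
    rw [e1, e2]
    exact h
  exact h2.comp h1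

end ElevenSixth

open ElevenSixth

/-- **The `11/6` volume bound** (Lemma `vol5/3` of the paper): if the areas of `Δ₁ + Δ`
and `Δ₂ + Δ` are both at least `2`, then the volume of the convex hull of
`(Δ₁ + Δ) × {0} ∪ (Δ₂ + Δ) × {1}` in `ℝ³` is at least `11/6`. -/
theorem volume_convexHull_ge_eleven_sixths (T : Finset (ℤ × ℤ)) (hT : T.Nonempty)
    (Δ : Set (ℝ × ℝ))
    (hΔ : Δ = convexHull ℝ ((fun p : ℤ × ℤ => ((p.1 : ℝ), (p.2 : ℝ))) '' (T : Set (ℤ × ℤ))))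
    (h1 : 2 ≤ volume (Δ₁ + Δ)) (h2 : 2 ≤ volume (Δ₂ + Δ)) :
    11 / 6 ≤ volume (convexHull ℝ
      ((fun p : ℝ × ℝ => (p.1, p.2, (0 : ℝ))) '' (Δ₁ + Δ) ∪
       (fun p : ℝ × ℝ => (p.1, p.2, (1 : ℝ))) '' (Δ₂ + Δ))) := by
  classical
  -- properties of Δ
  have hTfin : ((fun p : ℤ × ℤ => ((p.1 : ℝ), (p.2 : ℝ))) '' (T : Set (ℤ × ℤ))).Finite :=
    T.finite_toSet.image _
  have hΔc : Convex ℝ Δ := hΔ ▸ convex_convexHull ℝ _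
  have hΔk : IsCompact Δ := hΔ ▸ hTfin.isCompact_convexHull ℝ
  have hΔn : Δ.Nonempty := by
    obtain ⟨t, ht⟩ := hT
    exact hΔ ▸ ⟨_, subset_convexHull ℝ _ ⟨t, by simpa using ht, rfl⟩⟩
  -- properties of the triangles
  have h1c : Convex ℝ Δ₁ := convex_convexHull ℝ _
  have h2c : Convex ℝ Δ₂ := convex_convexHull ℝ _
  have h1k : IsCompact Δ₁ := (Set.toFinite _).isCompact_convexHull ℝ
  have h2k : IsCompact Δ₂ := (Set.toFinite _).isCompact_convexHull ℝ
  have h00 : ((0:ℝ), (0:ℝ)) ∈ Δ₁ := subset_convexHull ℝ _ (Set.mem_insert _ _)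
  have h10 : ((1:ℝ), (0:ℝ)) ∈ Δ₁ :=
    subset_convexHull ℝ _ (Set.mem_insert_of_mem _ (Set.mem_insert _ _))
  have h10' : ((1:ℝ), (0:ℝ)) ∈ Δ₂ := subset_convexHull ℝ _ (Set.mem_insert _ _)
  have h01' : ((0:ℝ), (1:ℝ)) ∈ Δ₂ :=
    subset_convexHull ℝ _ (Set.mem_insert_of_mem _ (Set.mem_insert _ _))
  set A := Δ₁ + Δ with hA
  set B := Δ₂ + Δ with hB
  have hAc : Convex ℝ A := h1c.add hΔc
  have hBc : Convex ℝ B := h2c.add hΔc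
  have hAk : IsCompact A := h1k.add hΔk
  have hBk : IsCompact B := h2k.add hΔk
  obtain ⟨d, hd⟩ := hΔn
  have hAn : A.Nonempty := ⟨((0:ℝ), (0:ℝ)) + d, add_mem_add h00 hd⟩
  have hBn : B.Nonempty := ⟨((1:ℝ), (0:ℝ)) + d, add_mem_add h10' hd⟩
  -- the compact "join" set L inside the convex hull
  set L : Set (ℝ × ℝ × ℝ) := (fun q : ℝ × ((ℝ × ℝ) × (ℝ × ℝ)) =>
      (1 - q.1) • ((q.2.1.1, q.2.1.2, (0:ℝ)) : ℝ × ℝ × ℝ)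
        + q.1 • ((q.2.2.1, q.2.2.2, (1:ℝ)) : ℝ × ℝ × ℝ)) ''
      ((Icc (0:ℝ) 1) ×ˢ (A ×ˢ B)) with hL
  have hLsub : L ⊆ convexHull ℝ
      ((fun p : ℝ × ℝ => (p.1, p.2, (0 : ℝ))) '' A ∪
       (fun p : ℝ × ℝ => (p.1, p.2, (1 : ℝ))) '' B) := by
    rintro x ⟨⟨t, pa, pb⟩, ⟨ht, hpa, hpb⟩, rfl⟩
    have hmem1 : ((pa.1, pa.2, (0:ℝ)) : ℝ × ℝ × ℝ) ∈ convexHull ℝ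
        ((fun p : ℝ × ℝ => (p.1, p.2, (0 : ℝ))) '' A ∪
         (fun p : ℝ × ℝ => (p.1, p.2, (1 : ℝ))) '' B) :=
      subset_convexHull ℝ _ (Or.inl ⟨pa, hpa, rfl⟩)
    have hmem2 : ((pb.1, pb.2, (1:ℝ)) : ℝ × ℝ × ℝ) ∈ convexHull ℝ
        ((fun p : ℝ × ℝ => (p.1, p.2, (0 : ℝ))) '' A ∪
         (fun p : ℝ × ℝ => (p.1, p.2, (1 : ℝ))) '' B) :=
      subset_convexHull ℝ _ (Or.inr ⟨pb, hpb, rfl⟩)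
    show (1 - t) • ((pa.1, pa.2, (0:ℝ)) : ℝ × ℝ × ℝ)
        + t • ((pb.1, pb.2, (1:ℝ)) : ℝ × ℝ × ℝ) ∈ _
    exact (convex_convexHull ℝ _) hmem1 hmem2
      (by linarith [ht.2] : (0:ℝ) ≤ 1 - t) ht.1 (by ring)
  have hLk : IsCompact L := by
    apply (isCompact_Icc.prod (hAk.prod hBk)).image
    apply Continuous.add
    · exact (continuous_const.sub continuous_fst).smul (by fun_prop)
    · exact continuous_fst.smul (by fun_prop)
  have hLm : MeasurableSet L := hLk.isClosed.measurableSet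
  -- the reordered set W
  set W : Set (ℝ × ℝ × ℝ) := (fun q : ℝ × ℝ × ℝ => (q.2.1, q.2.2, q.1)) ⁻¹' L with hW
  have hWm : MeasurableSet W := hLm.preimage mp.measurable
  have hμW : volume L = ∫⁻ z, volume (Prod.mk z ⁻¹' W) := by
    rw [← mp.measure_preimage hLm.nullMeasurableSet, ← hW, Measure.volume_eq_prod]
    exact Measure.prod_apply hWm
  -- the slices of W contain the Minkowski combinations
  have hsub : ∀ z ∈ Icc (0:ℝ) 1, (1 - z) • A + z • B ⊆ Prod.mk z ⁻¹' W := by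
    intro z hz p hp
    obtain ⟨u', hu', v', hv', rfl⟩ := hp
    obtain ⟨pa, hpa, rfl⟩ := hu'
    obtain ⟨pb, hpb, rfl⟩ := hv'
    show ((((1 - z) • pa + z • pb).1, ((1 - z) • pa + z • pb).2, z) : ℝ × ℝ × ℝ) ∈ L
    refine ⟨(z, pa, pb), ⟨hz, hpa, hpb⟩, ?_⟩
    simp only [Prod.smul_mk, Prod.mk_add_mk, smul_eq_mul, Prod.fst_add, Prod.snd_add,
      Prod.smul_fst, Prod.smul_snd, Prod.mk.injEq]
    exact ⟨trivial, trivial, by ring⟩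
  -- volume facts
  have hAfin : volume A ≠ ⊤ := hAk.measure_lt_top.ne
  have hBfin : volume B ≠ ⊤ := hBk.measure_lt_top.ne
  have hra : (2:ℝ) ≤ (volume A).toReal := by
    have := ENNReal.toReal_mono hAfin h1
    simpa using this
  have hrb : (2:ℝ) ≤ (volume B).toReal := by
    have := ENNReal.toReal_mono hBfin h2
    simpa using this
  have hA' : volume A = ENNReal.ofReal ((volume A).toReal) := (ENNReal.ofReal_toReal hAfin).symm
  have hB' : volume B = ENNReal.ofReal ((volume B).toReal) := (ENNReal.ofReal_toReal hBfin).symm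
  -- per-slice bound
  have hslice : ∀ z ∈ Ioo (0:ℝ) 1, (2:ℝ≥0∞) ≤ volume (Prod.mk z ⁻¹' W) := by
    intro z hz
    obtain ⟨hz0, hz1⟩ := hz
    set X := (1 - z) • A with hX
    set Y := z • B with hY
    have hXc : Convex ℝ X := hAc.smul _
    have hYc : Convex ℝ Y := hBc.smul _
    have hXk : IsCompact X := by
      rw [hX, ← Set.image_smul]; exact hAk.image (continuous_const_smul _)
    have hYk : IsCompact Y := by
      rw [hY, ← Set.image_smul]; exact hBk.image (continuous_const_smul _)
    have hXn : X.Nonempty := hAn.smul_set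
    have hYn : Y.Nonempty := hBn.smul_set
    -- widths
    have hm1 : d ∈ A := by
      have := add_mem_add h00 hd
      simpa [Prod.mk_zero_zero] using this
    have hm2 : (((1:ℝ), (0:ℝ)) + d) ∈ A := add_mem_add h10 hd
    have hm1' : (((1:ℝ), (0:ℝ)) + d) ∈ B := add_mem_add h10' hd
    have hm2' : (((0:ℝ), (1:ℝ)) + d) ∈ B := add_mem_add h01' hd
    have hp1 : (1 - z) * d.1 ∈ Prod.fst '' X :=
      ⟨(1 - z) • d, smul_mem_smul_set hm1, by simp [smul_eq_mul]⟩
    have hp2 : (1 - z) * (1 + d.1) ∈ Prod.fst '' X :=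
      ⟨(1 - z) • (((1:ℝ), (0:ℝ)) + d), smul_mem_smul_set hm2, by simp [smul_eq_mul]; ring⟩
    have hq1 : z * (1 + d.1) ∈ Prod.fst '' Y :=
      ⟨z • (((1:ℝ), (0:ℝ)) + d), smul_mem_smul_set hm1', by simp [smul_eq_mul]; ring⟩
    have hq2 : z * d.1 ∈ Prod.fst '' Y :=
      ⟨z • (((0:ℝ), (1:ℝ)) + d), smul_mem_smul_set hm2', by simp [smul_eq_mul]⟩
    set aX := sInf (Prod.fst '' X) with haX
    set bX := sSup (Prod.fst '' X) with hbX
    set aY := sInf (Prod.fst '' Y) with haY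
    set bY := sSup (Prod.fst '' Y) with hbY
    have hwX : 0 < bX - aX := by
      have h1' := csInf_le (hXk.image continuous_fst).bddBelow hp1
      have h2' := le_csSup (hXk.image continuous_fst).bddAbove hp2
      have he : (1 - z) * (1 + d.1) - (1 - z) * d.1 = 1 - z := by ring
      rw [← haX] at h1'; rw [← hbX] at h2'
      nlinarith
    have hwY : 0 < bY - aY := by
      have h1' := csInf_le (hYk.image continuous_fst).bddBelow hq2
      have h2' := le_csSup (hYk.image continuous_fst).bddAbove hq1
      have he : z * (1 + d.1) - z * d.1 = z := by ring
      rw [← haY] at h1'; rw [← hbY] at h2'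
      nlinarith
    have hXp : Prod.fst '' X = Icc aX (aX + (bX - aX)) := by
      rw [prj_eq hXc hXk hXn, ← haX, ← hbX, show aX + (bX - aX) = bX by ring]
    have hYp : Prod.fst '' Y = Icc aY (aY + (bY - aY)) := by
      rw [prj_eq hYc hYk hYn, ← haY, ← hbY, show aY + (bY - aY) = bY by ring]
    have hkey := key hXc hYc hXk hYk hXp hYp hwX hwY
    -- volumes of the dilates
    have hvX : volume X = ENNReal.ofReal ((1 - z) ^ 2) * volume A := by
      rw [hX, Measure.addHaar_smul_of_nonneg volume (by linarith) A]
      norm_num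
    have hvY : volume Y = ENNReal.ofReal (z ^ 2) * volume B := by
      rw [hY, Measure.addHaar_smul_of_nonneg volume (by linarith) B]
      norm_num
    set u := bX - aX
    set v := bY - aY
    have huv1 : (0:ℝ) ≤ (u + v) / u := div_nonneg (by linarith) (by linarith)
    have huv2 : (0:ℝ) ≤ (u + v) / v := div_nonneg (by linarith) (by linarith)
    calc (2:ℝ≥0∞) = ENNReal.ofReal 2 := by simp
      _ ≤ ENNReal.ofReal ((u + v) / u * ((1 - z) ^ 2 * (volume A).toReal)
            + (u + v) / v * (z ^ 2 * (volume B).toReal)) :=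
          ENNReal.ofReal_le_ofReal (real_ineq hwX hwY hz0.le hz1.le hra hrb)
      _ ≤ ENNReal.ofReal ((u + v) / u * ((1 - z) ^ 2 * (volume A).toReal))
            + ENNReal.ofReal ((u + v) / v * (z ^ 2 * (volume B).toReal)) :=
          ENNReal.ofReal_add_le
      _ = ENNReal.ofReal ((u + v) / u) * volume X + ENNReal.ofReal ((u + v) / v) * volume Y := by
          rw [ENNReal.ofReal_mul huv1, ENNReal.ofReal_mul huv2,
            ENNReal.ofReal_mul (sq_nonneg (1 - z)), ENNReal.ofReal_mul (sq_nonneg z),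
            hvX, hvY, ENNReal.ofReal_toReal hAfin, ENNReal.ofReal_toReal hBfin]
      _ ≤ volume (X + Y) := hkey
      _ ≤ volume (Prod.mk z ⁻¹' W) := measure_mono (hsub z ⟨hz0.le, hz1.le⟩)
  -- put everything together
  calc (11 / 6 : ℝ≥0∞) ≤ 2 := ENNReal.div_le_of_le_mul (by norm_num)
    _ = ∫⁻ z, (Ioo (0:ℝ) 1).indicator (fun _ => (2:ℝ≥0∞)) z := by
        rw [lintegral_indicator measurableSet_Ioo, setLIntegral_const, Real.volume_Ioo]
        norm_num
    _ ≤ ∫⁻ z, volume (Prod.mk z ⁻¹' W) := by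
        apply lintegral_mono
        intro z
        by_cases hz : z ∈ Ioo (0:ℝ) 1
        · rw [Set.indicator_of_mem hz]
          exact hslice z hz
        · rw [Set.indicator_of_notMem hz]
          exact zero_le
    _ = volume L := hμW.symm
    _ ≤ volume (convexHull ℝ
          ((fun p : ℝ × ℝ => (p.1, p.2, (0 : ℝ))) '' A ∪
           (fun p : ℝ × ℝ => (p.1, p.2, (1 : ℝ))) '' B)) := measure_mono hLsub
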